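/- Let X be a set with a coarse structure C and a uniform structure U that are compatible. Let (A, B) be a uniformly excisive decomposition of (X, U) witnessed by an entourage U₀ ∈ C ∩ U and a function κ taking values in C. Then for every coarse entourage V ∈ C with V ⊆ U₀ⁿ for some n ∈ ℕ, one has V[A] ∩ V[B] ⊆ (U₀^{2n+1} ∘ κ(U₀))[A ∩ B]. -/

import Mathlib

def relImage {α : Type*} (W : Set (α × α)) (S : Set α) : Set α := {x | ∃ s ∈ S, (x, s) ∈ W}

def relPow {α : Type*} (V : Set (α × α)) : ℕ → Set (α × α)
  | 0 => Set.diagonal α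
  | n + 1 => SetRel.comp (relPow V n) V

lemma relPow_mono {X : Type*} {U₀ : Set (X × X)} (hdiag : Set.diagonal X ⊆ U₀)
    {m k : ℕ} (hmk : m ≤ k) {x y : X} (h : (x, y) ∈ relPow U₀ m) : (x, y) ∈ relPow U₀ k := by
  induction hmk with
  | refl => exact h
  | step _ ih => exact ⟨y, ih, hdiag rfl⟩

lemma chain_of_relPow {X : Type*} {V : Set (X × X)} :
    ∀ (n : ℕ) (x y : X), (x, y) ∈ relPow V n →
      ∃ c : ℕ → X, c 0 = x ∧ c n = y ∧ ∀ i < n, (c i, c (i + 1)) ∈ V := by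
  intro n
  induction n with
  | zero =>
    intro x y h
    exact ⟨fun _ => x, rfl, h, fun i hi => absurd hi (by omega)⟩
  | succ n ih =>
    intro x y h
    obtain ⟨m, hxm, hmy⟩ := h
    obtain ⟨c, hc0, hcn, hstep⟩ := ih x m hxm
    refine ⟨fun i => if i ≤ n then c i else y, by simp [hc0], by simp, ?_⟩
    intro i hi
    by_cases h1 : i < n
    · simp only [if_pos (le_of_lt h1), if_pos (Nat.succ_le_of_lt h1)]
      exact hstep i h1
    · have hin : i = n := by omega
      rw [hin]
      simp only [if_pos (le_refl n), if_neg (show ¬ n + 1 ≤ n by omega), hcn]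
      exact hmy

lemma relPow_of_chain {X : Type*} {V : Set (X × X)} {c : ℕ → X} {n : ℕ}
    (hstep : ∀ i < n, (c i, c (i + 1)) ∈ V) :
    ∀ m, m ≤ n → (c 0, c m) ∈ relPow V m := by
  intro m
  induction m with
  | zero => intro _; exact rfl
  | succ m ih => intro hm; exact ⟨c m, ih (by omega), hstep m (by omega)⟩

/-- Key combinatorial estimate for uniformly excisive decompositions: if `(A,B)` covers `X`,
`U₀` contains the diagonal, and `κ` is an excision function for `(A,B)` below `U₀`, then for
every `V ⊆ U₀ⁿ` one has `V[A] ∩ V[B] ⊆ (U₀^{2n+1} ∘ κ(U₀))[A ∩ B]`. -/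
theorem stmt3 {X : Type*} (A B : Set X) (hAB : A ∪ B = Set.univ)
    (U₀ : Set (X × X)) (hdiag : Set.diagonal X ⊆ U₀)
    (κ : Set (X × X) → Set (X × X))
    (hκ : ∀ W : Set (X × X), W ⊆ U₀ →
      relImage W A ∩ relImage W B ⊆ relImage (κ W) (A ∩ B))
    (V : Set (X × X)) (n : ℕ) (hV : V ⊆ relPow U₀ n) :
    relImage V A ∩ relImage V B ⊆
      relImage (SetRel.comp (relPow U₀ (2 * n + 1)) (κ U₀)) (A ∩ B) := by
  classical
  rintro z ⟨⟨a, haA, hza⟩, ⟨b, hbB, hzb⟩⟩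
  obtain ⟨c, hc0, hcn, hcstep⟩ := chain_of_relPow n z a (hV hza)
  obtain ⟨e, he0, hen, hestep⟩ := chain_of_relPow n z b (hV hzb)
  let f : ℕ → X := fun i => if i ≤ n then c (n - i) else e (i - n)
  have hfeq : ∀ i, f i = if i ≤ n then c (n - i) else e (i - n) := fun _ => rfl
  have hf2n : f (2 * n) ∈ B := by
    rcases Nat.eq_zero_or_pos n with h | h
    · subst h
      have : f 0 = b := by
        rw [hfeq]
        simp only [le_refl, if_pos, Nat.sub_zero]
        rw [hc0, ← he0, hen]
      simpa [this] using hbB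
    · have : f (2 * n) = b := by
        rw [hfeq, if_neg (by omega : ¬ 2 * n ≤ n), (by omega : 2 * n - n = n), hen]
      rw [this]; exact hbB
  have hex : ∃ i, f i ∈ B := ⟨2 * n, hf2n⟩
  have hi₀B : f (Nat.find hex) ∈ B := Nat.find_spec hex
  have hi₀le : Nat.find hex ≤ 2 * n := Nat.find_le hf2n
  rcases Nat.eq_zero_or_pos (Nat.find hex) with h0 | h0
  · have hfa : f 0 = a := by rw [hfeq, if_pos (Nat.zero_le n), Nat.sub_zero, hcn]
    have haB : a ∈ B := by rw [h0, hfa] at hi₀B; exact hi₀B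
    obtain ⟨p, hp, hap⟩ := hκ U₀ (fun _ h => h) ⟨⟨a, haA, hdiag rfl⟩, ⟨a, haB, hdiag rfl⟩⟩
    exact ⟨p, hp, a, relPow_mono hdiag (by omega) (hV hza), hap⟩
  · obtain ⟨j, hj⟩ : ∃ j, Nat.find hex = j + 1 := ⟨Nat.find hex - 1, by omega⟩
    rw [hj] at hi₀B hi₀le
    have hjA : f j ∈ A := by
      have hnB : f j ∉ B := Nat.find_min hex (by omega)
      have : f j ∈ A ∪ B := by rw [hAB]; trivial
      rcases this with h | h
      · exact h
      · exact absurd h hnB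
    by_cases hjn : j + 1 ≤ n
    · have hfj : f j = c (n - j) := by rw [hfeq, if_pos (by omega)]
      have hfj1 : f (j + 1) = c (n - (j + 1)) := by rw [hfeq, if_pos hjn]
      have hedge : (f (j + 1), f j) ∈ U₀ := by
        rw [hfj, hfj1]
        have h1 : n - (j + 1) + 1 = n - j := by omega
        have := hcstep (n - (j + 1)) (by omega)
        rwa [h1] at this
      obtain ⟨p, hp, hwp⟩ := hκ U₀ (fun _ h => h)
        ⟨⟨f j, hjA, hedge⟩, ⟨f (j + 1), hi₀B, hdiag rfl⟩⟩
      refine ⟨p, hp, f (j + 1), ?_, hwp⟩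
      rw [hfj1]
      exact relPow_mono hdiag (by omega : n - (j + 1) ≤ 2 * n + 1)
        (hc0 ▸ relPow_of_chain hcstep (n - (j + 1)) (by omega))
    · have hfj : f j = e (j - n) := by
        by_cases h : j ≤ n
        · have hjn' : j = n := by omega
          rw [hjn', hfeq, if_pos (le_refl n), Nat.sub_self, hc0]
          exact he0.symm
        · rw [hfeq, if_neg h]
      have hfj1 : f (j + 1) = e (j - n + 1) := by
        rw [hfeq, if_neg hjn, (by omega : j + 1 - n = j - n + 1)]
      have hedge : (f j, f (j + 1)) ∈ U₀ := by
        rw [hfj, hfj1]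
        exact hestep (j - n) (by omega)
      obtain ⟨p, hp, hwp⟩ := hκ U₀ (fun _ h => h)
        ⟨⟨f j, hjA, hdiag rfl⟩, ⟨f (j + 1), hi₀B, hedge⟩⟩
      refine ⟨p, hp, f j, ?_, hwp⟩
      rw [hfj]
      exact relPow_mono hdiag (by omega : j - n ≤ 2 * n + 1)
        (he0 ▸ relPow_of_chain hestep (j - n) (by omega))
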